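/- Let X be a convex body in ℝ³ and m an interior point of X. Define M(X) = ∫_{P_m} ‖y − m‖^{−2} dy, where P_m = {m + t·p_m(w)·w : t ∈ [0,1), w ∈ S²} is the region bounded by the pedal surface of X with respect to m, and p_m(w) = sup_{x ∈ X} ⟨x − m, w⟩. Then M(X) does not depend on the choice of interior point m. -/

import Mathlib

open MeasureTheory Set Metric
open scoped RealInnerProductSpace Pointwise ENNReal


noncomputable def pedalSfn (X : Set (EuclideanSpace ℝ (Fin 3))) (w : EuclideanSpace ℝ (Fin 3)) : ℝ :=
  sSup ((fun x => ⟪x, w⟫) '' X)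

lemma pedal_bddAbove {X : Set (EuclideanSpace ℝ (Fin 3))} (hX : IsCompact X)
    (w : EuclideanSpace ℝ (Fin 3)) : BddAbove ((fun x => ⟪x, w⟫) '' X) :=
  (hX.image (continuous_id.inner continuous_const)).bddAbove

lemma pedal_le_sfn {X : Set (EuclideanSpace ℝ (Fin 3))} (hX : IsCompact X)
    {x : EuclideanSpace ℝ (Fin 3)} (hx : x ∈ X) (w : EuclideanSpace ℝ (Fin 3)) :
    ⟪x, w⟫ ≤ pedalSfn X w :=
  le_csSup (pedal_bddAbove hX w) (mem_image_of_mem _ hx)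

lemma pedal_p_eq {X : Set (EuclideanSpace ℝ (Fin 3))} (hX : IsCompact X) (hne : X.Nonempty)
    (m w : EuclideanSpace ℝ (Fin 3)) :
    sSup ((fun x => ⟪x - m, w⟫) '' X) = pedalSfn X w - ⟪m, w⟫ := by
  have himg : (fun x => ⟪x - m, w⟫) '' X
      = (fun t => t - ⟪m, w⟫) '' ((fun x => ⟪x, w⟫) '' X) := by
    rw [Set.image_image]
    exact Set.image_congr fun x _ => inner_sub_left x m w
  rw [himg]
  exact (Monotone.map_csSup_of_continuousAt ((continuous_id.sub continuous_const).continuousAt)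
    (fun a b hab => by simpa using hab) (hne.image _) (pedal_bddAbove hX w)).symm

lemma pedal_sfn_pos {X : Set (EuclideanSpace ℝ (Fin 3))} (hX : IsCompact X)
    {m : EuclideanSpace ℝ (Fin 3)} (hm : m ∈ interior X)
    {w : EuclideanSpace ℝ (Fin 3)} (hw : ‖w‖ = 1) : ⟪m, w⟫ < pedalSfn X w := by
  obtain ⟨ε, hε, hball⟩ := Metric.isOpen_iff.1 isOpen_interior m hm
  have hx : m + (ε/2) • w ∈ X := by
    refine interior_subset (hball ?_)
    simp only [mem_ball, dist_self_add_left, norm_smul, Real.norm_eq_abs, hw, mul_one,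
      abs_of_pos (half_pos hε)]
    linarith
  have h1 := pedal_le_sfn hX hx w
  have h2 : ⟪m + (ε/2) • w, w⟫ = ⟪m, w⟫ + (ε/2) * (‖w‖ * ‖w‖) := by
    rw [inner_add_left, real_inner_smul_left, real_inner_self_eq_norm_mul_norm]
  rw [h2, hw] at h1
  linarith

lemma pedal_sfn_continuous {X : Set (EuclideanSpace ℝ (Fin 3))} (hX : IsCompact X)
    (hne : X.Nonempty) : Continuous (pedalSfn X) := by
  obtain ⟨R, hR⟩ := hX.isBounded.exists_norm_le
  obtain ⟨x₀, hx₀⟩ := id hne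
  have hR0 : 0 ≤ R := le_trans (norm_nonneg x₀) (hR x₀ hx₀)
  have step : ∀ w w' : EuclideanSpace ℝ (Fin 3),
      pedalSfn X w ≤ pedalSfn X w' + R * ‖w - w'‖ := by
    intro w w'
    refine csSup_le (hne.image _) ?_
    rintro a ⟨x, hx, rfl⟩
    have h1 : ⟪x, w⟫ - ⟪x, w'⟫ = ⟪x, w - w'⟫ := (inner_sub_right x w w').symm
    have h2 : ⟪x, w - w'⟫ ≤ ‖x‖ * ‖w - w'‖ := real_inner_le_norm x _
    have h3 : ‖x‖ * ‖w - w'‖ ≤ R * ‖w - w'‖ :=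
      mul_le_mul_of_nonneg_right (hR x hx) (norm_nonneg _)
    have h4 := pedal_le_sfn hX hx w'
    linarith
  refine (LipschitzWith.of_dist_le_mul (K := R.toNNReal) ?_).continuous
  intro w w'
  rw [Real.dist_eq, Real.coe_toNNReal R hR0, dist_eq_norm, abs_sub_le_iff]
  constructor
  · have := step w w'; linarith
  · have := step w' w; rw [norm_sub_rev] at this; linarith


lemma pedal_key
    (m : EuclideanSpace ℝ (Fin 3))
    (p : EuclideanSpace ℝ (Fin 3) → EuclideanSpace ℝ (Fin 3) → ℝ)
    (hcont : Continuous (p m))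
    (hpos : ∀ w : EuclideanSpace ℝ (Fin 3), ‖w‖ = 1 → 0 < p m w)
    (P : Set (EuclideanSpace ℝ (Fin 3)))
    (hPdef : P = {y | ∃ t ∈ Set.Ico (0 : ℝ) 1,
      ∃ w ∈ Metric.sphere (0 : EuclideanSpace ℝ (Fin 3)) 1, y = m + (t * p m w) • w}) :
    ∫ y in P, 1 / ‖y - m‖ ^ 2 ∂volume
      = (∫⁻ w : Metric.sphere (0 : EuclideanSpace ℝ (Fin 3)) 1,
          ENNReal.ofReal (p m ↑w) ∂(volume : Measure (EuclideanSpace ℝ (Fin 3))).toSphere).toReal := by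
  -- the translated region
  set Q : Set (EuclideanSpace ℝ (Fin 3)) :=
    {z | ∃ t ∈ Set.Ico (0 : ℝ) 1, ∃ w ∈ Metric.sphere (0 : EuclideanSpace ℝ (Fin 3)) 1,
      z = (t * p m w) • w} with hQdef
  set A : Set (EuclideanSpace ℝ (Fin 3)) :=
    {z | z ≠ 0 ∧ ‖z‖ < p m (‖z‖⁻¹ • z)} with hAdef
  have hQmem : ∀ z : EuclideanSpace ℝ (Fin 3), z ∈ Q ↔ z = 0 ∨ z ∈ A := by
    intro z
    constructor
    · rintro ⟨t, ⟨ht0, ht1⟩, w, hw, rfl⟩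
      rw [mem_sphere_zero_iff_norm] at hw
      by_cases hz : (t * p m w) • w = 0
      · exact Or.inl hz
      · refine Or.inr ⟨hz, ?_⟩
        have hpw : 0 < p m w := hpos w hw
        have htp : t * p m w ≠ 0 := by
          intro h; exact hz (by rw [h, zero_smul])
        have ht0' : 0 < t := lt_of_le_of_ne ht0 (by rintro rfl; simp at htp)
        have htp' : 0 < t * p m w := mul_pos ht0' hpw
        have hnorm : ‖(t * p m w) • w‖ = t * p m w := by
          rw [norm_smul, Real.norm_eq_abs, hw, mul_one, abs_of_pos htp']
        rw [hnorm, inv_smul_smul₀ htp]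
        exact mul_lt_of_lt_one_left hpw ht1
    · rintro (rfl | ⟨hz, hlt⟩)
      · obtain ⟨w, hw⟩ : (Metric.sphere (0 : EuclideanSpace ℝ (Fin 3)) 1).Nonempty :=
          NormedSpace.sphere_nonempty.2 zero_le_one
        exact ⟨0, ⟨le_refl 0, one_pos⟩, w, hw, by simp⟩
      · have hz' : (0:ℝ) < ‖z‖ := norm_pos_iff.2 hz
        have hw : ‖(‖z‖⁻¹ • z : EuclideanSpace ℝ (Fin 3))‖ = 1 := by
          rw [norm_smul, Real.norm_eq_abs, abs_inv, abs_of_pos hz', inv_mul_cancel₀ hz'.ne']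
        have hpw : 0 < p m (‖z‖⁻¹ • z) := hpos _ hw
        refine ⟨‖z‖ / p m (‖z‖⁻¹ • z), ⟨div_nonneg hz'.le hpw.le, (div_lt_one hpw).2 hlt⟩,
          ‖z‖⁻¹ • z, mem_sphere_zero_iff_norm.2 hw, ?_⟩
        rw [div_mul_cancel₀ _ hpw.ne', smul_smul, mul_inv_cancel₀ hz'.ne', one_smul]
  have hmeasA : MeasurableSet A := by
    have hg : Measurable fun z : EuclideanSpace ℝ (Fin 3) => p m (‖z‖⁻¹ • z) :=
      hcont.measurable.comp (measurable_norm.inv.smul measurable_id)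
    exact ((measurableSet_singleton 0).compl).inter (measurableSet_lt measurable_norm hg)
  have hQA : Q =ᵐ[volume] A := by
    rw [MeasureTheory.ae_eq_set]
    constructor
    · refine measure_mono_null (fun z hz => ?_) (measure_singleton (0 : EuclideanSpace ℝ (Fin 3)))
      rcases (hQmem z).1 hz.1 with rfl | hA
      · exact rfl
      · exact absurd hA hz.2
    · have h : A \ Q = ∅ := Set.diff_eq_empty.2 fun z hz => (hQmem z).2 (Or.inr hz)
      simp [h]
  have hQeq : Q = {0} ∪ A := Set.ext fun z => (hQmem z).trans (by simp [Set.mem_union])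
  have hmeasQ : MeasurableSet Q := hQeq ▸ ((measurableSet_singleton (0 : EuclideanSpace ℝ (Fin 3))).union hmeasA)
  have hPQ : (fun z => m + z) ⁻¹' P = Q := by
    ext z
    simp only [Set.mem_preimage, hPdef, Set.mem_setOf_eq, hQdef, add_right_inj]
  have step1 : ∫ y in P, 1 / ‖y - m‖ ^ 2 ∂volume = ∫ z in Q, 1 / ‖z‖ ^ 2 ∂volume := by
    rw [← (measurePreserving_add_left volume m).setIntegral_preimage_emb
      (measurableEmbedding_addLeft m) (fun y => 1 / ‖y - m‖ ^ 2) P, hPQ]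
    refine setIntegral_congr_fun hmeasQ fun z _ => by simp [add_sub_cancel_left]
  have step3 : ∫ z in A, 1 / ‖z‖ ^ 2 ∂volume
      = (∫⁻ z in A, ENNReal.ofReal (1 / ‖z‖ ^ 2) ∂volume).toReal := by
    refine integral_eq_lintegral_of_nonneg_ae (Filter.Eventually.of_forall fun z => by positivity) ?_
    exact (measurable_const.div (measurable_norm.pow_const 2)).aestronglyMeasurable
  have step4 : ∫⁻ z in A, ENNReal.ofReal (1 / ‖z‖ ^ 2) ∂volume
      = ∫⁻ w : Metric.sphere (0 : EuclideanSpace ℝ (Fin 3)) 1,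
          ENNReal.ofReal (p m ↑w) ∂(volume : Measure (EuclideanSpace ℝ (Fin 3))).toSphere := by
    have hA0 : A ⊆ {(0 : EuclideanSpace ℝ (Fin 3))}ᶜ := fun z hz => hz.1
    have hs0 : MeasurableSet ({(0 : EuclideanSpace ℝ (Fin 3))} : Set _)ᶜ :=
      (measurableSet_singleton 0).compl
    set t : Set (({(0 : EuclideanSpace ℝ (Fin 3))}ᶜ : Set (EuclideanSpace ℝ (Fin 3)))) :=
      Subtype.val ⁻¹' A with htdef
    have ht : MeasurableSet t := hmeasA.preimage measurable_subtype_coe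
    have himg : Subtype.val '' t = A := by
      ext x
      constructor
      · rintro ⟨y, hy, rfl⟩; exact hy
      · intro hx; exact ⟨⟨x, hA0 hx⟩, hx, rfl⟩
    set S : Set (Metric.sphere (0 : EuclideanSpace ℝ (Fin 3)) 1 × Set.Ioi (0:ℝ)) :=
      {q | (q.2 : ℝ) < p m (q.1 : EuclideanSpace ℝ (Fin 3))} with hSdef
    have hSmeas : MeasurableSet S :=
      (isOpen_lt (continuous_subtype_val.comp continuous_snd)
        (hcont.comp (continuous_subtype_val.comp continuous_fst))).measurableSet
    set G : Metric.sphere (0 : EuclideanSpace ℝ (Fin 3)) 1 × Set.Ioi (0:ℝ) → ℝ≥0∞ :=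
      S.indicator (fun q => ENNReal.ofReal (1 / (q.2 : ℝ) ^ 2)) with hGdef
    have hGmeas : Measurable G :=
      ((measurable_const.div ((measurable_subtype_coe.comp measurable_snd).pow_const 2)).ennreal_ofReal).indicator hSmeas
    have hpt : ∀ x : ({(0 : EuclideanSpace ℝ (Fin 3))}ᶜ : Set (EuclideanSpace ℝ (Fin 3))),
        t.indicator (fun x => ENNReal.ofReal (1 / ‖(x : EuclideanSpace ℝ (Fin 3))‖ ^ 2)) x
          = G (homeomorphUnitSphereProd (EuclideanSpace ℝ (Fin 3)) x) := by
      intro x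
      have hx0 : (x : EuclideanSpace ℝ (Fin 3)) ≠ 0 := x.2
      have hmem : (homeomorphUnitSphereProd (EuclideanSpace ℝ (Fin 3)) x ∈ S) ↔ x ∈ t := by
        simp only [hSdef, Set.mem_setOf_eq, homeomorphUnitSphereProd_apply_snd_coe,
          homeomorphUnitSphereProd_apply_fst_coe, htdef, Set.mem_preimage, hAdef]
        exact ⟨fun h => ⟨hx0, h⟩, fun h => h.2⟩
      by_cases hx : x ∈ t
      · rw [Set.indicator_of_mem hx, hGdef, Set.indicator_of_mem (hmem.2 hx)]
        simp [homeomorphUnitSphereProd_apply_snd_coe]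
      · rw [Set.indicator_of_notMem hx, hGdef,
          Set.indicator_of_notMem (fun h => hx (hmem.1 h))]
    have inner_calc : ∀ w : Metric.sphere (0 : EuclideanSpace ℝ (Fin 3)) 1,
        ∫⁻ r : Set.Ioi (0:ℝ), G (w, r) ∂(MeasureTheory.Measure.volumeIoiPow 2)
          = ENNReal.ofReal (p m (w : EuclideanSpace ℝ (Fin 3))) := by
      intro w
      have hw1 : ‖(w : EuclideanSpace ℝ (Fin 3))‖ = 1 := mem_sphere_zero_iff_norm.1 w.2
      have hc : 0 < p m (w : EuclideanSpace ℝ (Fin 3)) := hpos _ hw1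
      set T : Set (Set.Ioi (0:ℝ)) := {r | (r : ℝ) < p m (w : EuclideanSpace ℝ (Fin 3))} with hTdef
      have hTmeas : MeasurableSet T := measurableSet_lt measurable_subtype_coe measurable_const
      have h1 : ∀ r : Set.Ioi (0:ℝ), G (w, r)
          = T.indicator (fun r : Set.Ioi (0:ℝ) => ENNReal.ofReal (1 / (r:ℝ)^2)) r := by
        intro r
        rw [hGdef]
        by_cases hr : (r : ℝ) < p m (w : EuclideanSpace ℝ (Fin 3))
        · rw [Set.indicator_of_mem (show ((w,r) : _ × _) ∈ S from hr),
            Set.indicator_of_mem (show r ∈ T from hr)]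
        · rw [Set.indicator_of_notMem (show ((w,r) : _ × _) ∉ S from hr),
            Set.indicator_of_notMem (show r ∉ T from hr)]
      have hfm : Measurable fun r : Set.Ioi (0:ℝ) => ENNReal.ofReal ((r:ℝ) ^ 2) :=
        (measurable_subtype_coe.pow_const 2).ennreal_ofReal
      have hgm : Measurable fun r : Set.Ioi (0:ℝ) => ENNReal.ofReal (1 / (r:ℝ) ^ 2) :=
        (measurable_const.div (measurable_subtype_coe.pow_const 2)).ennreal_ofReal
      have himgT : Subtype.val '' T = Set.Ioo 0 (p m (w : EuclideanSpace ℝ (Fin 3))) := by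
        ext x
        constructor
        · rintro ⟨r, hr, rfl⟩; exact ⟨r.2, hr⟩
        · rintro ⟨h0, hc'⟩; exact ⟨⟨x, h0⟩, hc', rfl⟩
      calc ∫⁻ r : Set.Ioi (0:ℝ), G (w, r) ∂(MeasureTheory.Measure.volumeIoiPow 2)
          = ∫⁻ r : Set.Ioi (0:ℝ) in T, ENNReal.ofReal (1 / (r:ℝ)^2)
              ∂(MeasureTheory.Measure.volumeIoiPow 2) := by
            rw [lintegral_congr h1, lintegral_indicator hTmeas]
        _ = ∫⁻ r : Set.Ioi (0:ℝ) in T, ENNReal.ofReal ((r:ℝ)^2) * ENNReal.ofReal (1 / (r:ℝ)^2)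
              ∂((volume : Measure ℝ).comap Subtype.val) := by
            rw [MeasureTheory.Measure.volumeIoiPow, restrict_withDensity hTmeas,
              lintegral_withDensity_eq_lintegral_mul _ hfm hgm]
            rfl
        _ = ∫⁻ _ : Set.Ioi (0:ℝ) in T, 1 ∂((volume : Measure ℝ).comap Subtype.val) := by
            refine setLIntegral_congr_fun hTmeas (fun r hr => ?_)
            have hr0 : (0:ℝ) < (r:ℝ) := r.2
            rw [← ENNReal.ofReal_mul (by positivity), mul_one_div, div_self (by positivity),
              ENNReal.ofReal_one]
        _ = ((volume : Measure ℝ).comap Subtype.val) T := setLIntegral_one T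
        _ = volume (Subtype.val '' T) :=
            (MeasurableEmbedding.subtype_coe measurableSet_Ioi).comap_apply _ _
        _ = ENNReal.ofReal (p m (w : EuclideanSpace ℝ (Fin 3))) := by
            rw [himgT, Real.volume_Ioo, sub_zero]
    have hrank : Module.finrank ℝ (EuclideanSpace ℝ (Fin 3)) - 1 = 2 := by
      simp [finrank_euclideanSpace]
    calc ∫⁻ z in A, ENNReal.ofReal (1 / ‖z‖ ^ 2) ∂volume
        = ∫⁻ x : ({(0 : EuclideanSpace ℝ (Fin 3))}ᶜ : Set (EuclideanSpace ℝ (Fin 3))) in t,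
            ENNReal.ofReal (1 / ‖(x : EuclideanSpace ℝ (Fin 3))‖ ^ 2)
            ∂((volume : Measure (EuclideanSpace ℝ (Fin 3))).comap Subtype.val) := by
          rw [setLIntegral_subtype hs0 t (fun z => ENNReal.ofReal (1 / ‖z‖ ^ 2)), himg]
      _ = ∫⁻ x, t.indicator (fun x => ENNReal.ofReal (1 / ‖(x : EuclideanSpace ℝ (Fin 3))‖ ^ 2)) x
            ∂((volume : Measure (EuclideanSpace ℝ (Fin 3))).comap Subtype.val) :=
          (lintegral_indicator ht _).symm
      _ = ∫⁻ x, G (homeomorphUnitSphereProd (EuclideanSpace ℝ (Fin 3)) x)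
            ∂((volume : Measure (EuclideanSpace ℝ (Fin 3))).comap Subtype.val) :=
          lintegral_congr hpt
      _ = ∫⁻ q, G q ∂((volume : Measure (EuclideanSpace ℝ (Fin 3))).toSphere.prod
            (MeasureTheory.Measure.volumeIoiPow (Module.finrank ℝ (EuclideanSpace ℝ (Fin 3)) - 1))) :=
          (MeasureTheory.Measure.measurePreserving_homeomorphUnitSphereProd
            (volume : Measure (EuclideanSpace ℝ (Fin 3)))).lintegral_comp_emb
            (Homeomorph.measurableEmbedding _) G
      _ = ∫⁻ w : Metric.sphere (0 : EuclideanSpace ℝ (Fin 3)) 1,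
            ∫⁻ r : Set.Ioi (0:ℝ), G (w, r) ∂(MeasureTheory.Measure.volumeIoiPow 2)
            ∂(volume : Measure (EuclideanSpace ℝ (Fin 3))).toSphere := by
          rw [hrank, lintegral_prod _ hGmeas.aemeasurable]
      _ = ∫⁻ w : Metric.sphere (0 : EuclideanSpace ℝ (Fin 3)) 1,
            ENNReal.ofReal (p m ↑w) ∂(volume : Measure (EuclideanSpace ℝ (Fin 3))).toSphere :=
          lintegral_congr inner_calc
  rw [step1, setIntegral_congr_set hQA, step3, step4]

lemma pedal_toSphere_neg_lintegral
    (f : EuclideanSpace ℝ (Fin 3) → ℝ≥0∞) (hf : Measurable f) :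
    ∫⁻ w : Metric.sphere (0 : EuclideanSpace ℝ (Fin 3)) 1, f (-(w : EuclideanSpace ℝ (Fin 3)))
        ∂(volume : Measure (EuclideanSpace ℝ (Fin 3))).toSphere
      = ∫⁻ w : Metric.sphere (0 : EuclideanSpace ℝ (Fin 3)) 1, f (w : EuclideanSpace ℝ (Fin 3))
        ∂(volume : Measure (EuclideanSpace ℝ (Fin 3))).toSphere := by
  have hn : Measurable fun w : Metric.sphere (0 : EuclideanSpace ℝ (Fin 3)) 1 => -w :=
    continuous_neg.measurable
  have hmap : ((volume : Measure (EuclideanSpace ℝ (Fin 3))).toSphere).map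
      (fun w : Metric.sphere (0 : EuclideanSpace ℝ (Fin 3)) 1 => -w)
      = (volume : Measure (EuclideanSpace ℝ (Fin 3))).toSphere := by
    ext s hs
    rw [Measure.map_apply hn hs, Measure.toSphere_apply' _ (hs.preimage hn),
      Measure.toSphere_apply' _ hs]
    have himg : (Subtype.val ''
        ((fun w : Metric.sphere (0 : EuclideanSpace ℝ (Fin 3)) 1 => -w) ⁻¹' s))
        = -(Subtype.val '' s) := by
      ext x
      constructor
      · rintro ⟨v, hv, rfl⟩
        rw [Set.mem_neg]
        exact ⟨-v, hv, by simp⟩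
      · intro hx
        rw [Set.mem_neg] at hx
        obtain ⟨u, hu, hux⟩ := hx
        refine ⟨-u, by simpa using hu, by simp [hux]⟩
    rw [himg, Set.smul_neg, volume.measure_neg]
  calc ∫⁻ w : Metric.sphere (0 : EuclideanSpace ℝ (Fin 3)) 1,
        f (-(w : EuclideanSpace ℝ (Fin 3)))
        ∂(volume : Measure (EuclideanSpace ℝ (Fin 3))).toSphere
      = ∫⁻ w : Metric.sphere (0 : EuclideanSpace ℝ (Fin 3)) 1,
          (fun v : Metric.sphere (0 : EuclideanSpace ℝ (Fin 3)) 1 =>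
            f (v : EuclideanSpace ℝ (Fin 3))) ((fun w => -w) w)
          ∂(volume : Measure (EuclideanSpace ℝ (Fin 3))).toSphere := by
        refine lintegral_congr fun w => ?_
        simp
    _ = ∫⁻ v : Metric.sphere (0 : EuclideanSpace ℝ (Fin 3)) 1, f (v : EuclideanSpace ℝ (Fin 3))
          ∂(((volume : Measure (EuclideanSpace ℝ (Fin 3))).toSphere).map (fun w => -w)) :=
        (lintegral_map (hf.comp measurable_subtype_coe) hn).symm
    _ = _ := by rw [hmap]

/-- For a convex body `X ⊂ ℝ³`, the quantity `M(X) = ∫_{P_m} ‖y - m‖⁻² dy`, where `P_m`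
is the region bounded by the pedal surface of `X` with respect to an interior point `m`,
does not depend on the choice of interior point `m`. -/
theorem pedal_integral_indep_of_point
    (X : Set (EuclideanSpace ℝ (Fin 3)))
    (hXconv : Convex ℝ X) (hXcomp : IsCompact X)
    (m₁ m₂ : EuclideanSpace ℝ (Fin 3))
    (hm₁ : m₁ ∈ interior X) (hm₂ : m₂ ∈ interior X)
    (p : EuclideanSpace ℝ (Fin 3) → EuclideanSpace ℝ (Fin 3) → ℝ)
    (hp : ∀ m w, p m w = sSup ((fun x => ⟪x - m, w⟫) '' X))
    (P : EuclideanSpace ℝ (Fin 3) → Set (EuclideanSpace ℝ (Fin 3)))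
    (hPdef : ∀ m, P m = {y | ∃ t ∈ Set.Ico (0 : ℝ) 1,
      ∃ w ∈ Metric.sphere (0 : EuclideanSpace ℝ (Fin 3)) 1, y = m + (t * p m w) • w}) :
    ∫ y in P m₁, 1 / ‖y - m₁‖ ^ 2 ∂volume = ∫ y in P m₂, 1 / ‖y - m₂‖ ^ 2 ∂volume := by
  have hne : X.Nonempty := ⟨m₁, interior_subset hm₁⟩
  have hps : ∀ m w, p m w = pedalSfn X w - ⟪m, w⟫ := fun m w => by
    rw [hp, pedal_p_eq hXcomp hne]
  have hcont : ∀ m, Continuous (p m) := fun m => by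
    have h : p m = fun w => pedalSfn X w - ⟪m, w⟫ := funext (hps m)
    rw [h]
    exact (pedal_sfn_continuous hXcomp hne).sub (continuous_const.inner continuous_id)
  have hpos : ∀ m ∈ interior X, ∀ w : EuclideanSpace ℝ (Fin 3), ‖w‖ = 1 → 0 < p m w := by
    intro m hm w hw
    rw [hps]
    exact sub_pos.2 (pedal_sfn_pos hXcomp hm hw)
  have key : ∀ m ∈ interior X, ∫ y in P m, 1 / ‖y - m‖ ^ 2 ∂volume
      = (∫⁻ w : Metric.sphere (0 : EuclideanSpace ℝ (Fin 3)) 1, ENNReal.ofReal (p m ↑w)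
          ∂(volume : Measure (EuclideanSpace ℝ (Fin 3))).toSphere).toReal :=
    fun m hm => pedal_key m p (hcont m) (hpos m hm) (P m) (hPdef m)
  have hsym : ∀ m ∈ interior X,
      2 * ∫⁻ w : Metric.sphere (0 : EuclideanSpace ℝ (Fin 3)) 1, ENNReal.ofReal (p m ↑w)
          ∂(volume : Measure (EuclideanSpace ℝ (Fin 3))).toSphere
        = ∫⁻ w : Metric.sphere (0 : EuclideanSpace ℝ (Fin 3)) 1,
            ENNReal.ofReal (pedalSfn X ↑w + pedalSfn X (-(↑w : EuclideanSpace ℝ (Fin 3))))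
          ∂(volume : Measure (EuclideanSpace ℝ (Fin 3))).toSphere := by
    intro m hm
    have hf1 : Measurable fun x : EuclideanSpace ℝ (Fin 3) => ENNReal.ofReal (p m x) :=
      (hcont m).measurable.ennreal_ofReal
    have hinv := pedal_toSphere_neg_lintegral _ hf1
    rw [two_mul]
    nth_rewrite 1 [← hinv]
    have hmeas : Measurable fun w : Metric.sphere (0 : EuclideanSpace ℝ (Fin 3)) 1 =>
        ENNReal.ofReal (p m (-(w : EuclideanSpace ℝ (Fin 3)))) :=
      hf1.comp (measurable_subtype_coe.neg)
    rw [← lintegral_add_left hmeas]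
    refine lintegral_congr fun w => ?_
    have hw1 : ‖(w : EuclideanSpace ℝ (Fin 3))‖ = 1 := mem_sphere_zero_iff_norm.1 w.2
    have hw2 : ‖(-(w : EuclideanSpace ℝ (Fin 3)))‖ = 1 := by rw [norm_neg]; exact hw1
    have := ENNReal.ofReal_add (hpos m hm _ hw2).le (hpos m hm _ hw1).le
    rw [← this]
    congr 1
    rw [hps, hps, inner_neg_right]
    ring
  rw [key m₁ hm₁, key m₂ hm₂]
  congr 1
  exact (ENNReal.mul_right_inj (by norm_num) (by norm_num)).1
    ((hsym m₁ hm₁).trans (hsym m₂ hm₂).symm)
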